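/- Let dʰ be an optimal solution of the High Point Relaxation: dʰ minimizes ‖d - d̃‖₂² over the set N = {d : ∃ x ≥ 0, g(x,d) ≥ 0 and |f(x) - f̃| ≤ β}, where d° ∈ N. Then ‖dʰ - d°‖₂ ≤ 2‖d̃ - d°‖₂. -/
import Mathlib

theorem stmt14 (m n k : ℕ)
    (g : (Fin n → ℝ) → EuclideanSpace ℝ (Fin m) → (Fin k → ℝ))
    (f : (Fin n → ℝ) → ℝ) (fT β : ℝ)
    (N : Set (EuclideanSpace ℝ (Fin m)))
    (hN : N = {d | ∃ x : Fin n → ℝ, (∀ i, 0 ≤ x i) ∧ (∀ j, 0 ≤ g x d j) ∧ |f x - fT| ≤ β})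
    (dO dT dH : EuclideanSpace ℝ (Fin m))
    (hO : dO ∈ N) (hH : dH ∈ N)
    (hmin : ∀ d ∈ N, ‖dH - dT‖ ^ 2 ≤ ‖d - dT‖ ^ 2) :
    ‖dH - dO‖ ≤ 2 * ‖dT - dO‖ := by
  have h1 : ‖dH - dT‖ ≤ ‖dO - dT‖ := by
    have := hmin dO hO
    nlinarith [norm_nonneg (dH - dT), norm_nonneg (dO - dT)]
  calc ‖dH - dO‖ ≤ ‖dH - dT‖ + ‖dT - dO‖ := norm_sub_le_norm_sub_add_norm_sub _ _ _
    _ ≤ ‖dO - dT‖ + ‖dT - dO‖ := by linarith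
    _ = 2 * ‖dT - dO‖ := by rw [norm_sub_rev]; ring
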